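/- Let A be a square-increasing IRL with e < f, where f := ¬e. Then the set {¬(f²), e, f, f²} consists of four distinct elements, forms a chain ¬(f²) < e < f < f², and is closed under ·, ∧, ∨, ¬; hence the four-element De Morgan monoid C₄ embeds into A. -/

import Mathlib

/-- An involutive commutative residuated lattice (IRL): a commutative monoid with a
lattice order and an involution `neg` satisfying `x * y ≤ z ↔ neg z * y ≤ neg x`. -/
class IRL (α : Type*) extends Lattice α, CommMonoid α where
  neg : α → α
  neg_neg : ∀ x : α, neg (neg x) = x
  res : ∀ x y z : α, x * y ≤ z ↔ neg z * y ≤ neg x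

namespace IRL

variable {α : Type*} [IRL α]

/-- Residuation operation `x → y := ¬(x · ¬y)`. -/
def arr (x y : α) : α := neg (x * neg y)

end IRL

open IRL in
lemma irl_neg_anti {α : Type*} [IRL α] {x y : α} (h : x ≤ y) : neg y ≤ neg x := by
  have := (res x 1 y).mp (by simpa using h)
  simpa using this

open IRL in
lemma irl_mul_mono {α : Type*} [IRL α] {x y : α} (h : x ≤ y) (z : α) : x * z ≤ y * z :=
  (res x z (y*z)).mpr (((res y z (y*z)).mp le_rfl).trans (irl_neg_anti h))

open IRL in
/-- If `e < f` in a square-increasing IRL, then `{¬(f²), e, f, f²}` is a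
four-element chain `¬(f²) < e < f < f²` closed under the operations; hence the
four-element De Morgan monoid `C₄` embeds into the algebra. -/
theorem stmt17 {α : Type*} [IRL α] (sq : ∀ x : α, x ≤ x * x)
    (hef : (1 : α) < neg 1) :
    neg ((neg 1 : α) * neg 1) < 1 ∧ (1 : α) < neg 1 ∧ (neg 1 : α) < neg 1 * neg 1 ∧
    (∀ x ∈ ({neg ((neg 1 : α) * neg 1), 1, neg 1, neg 1 * neg 1} : Set α),
     ∀ y ∈ ({neg ((neg 1 : α) * neg 1), 1, neg 1, neg 1 * neg 1} : Set α),
      x * y ∈ ({neg ((neg 1 : α) * neg 1), 1, neg 1, neg 1 * neg 1} : Set α) ∧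
      x ⊓ y ∈ ({neg ((neg 1 : α) * neg 1), 1, neg 1, neg 1 * neg 1} : Set α) ∧
      x ⊔ y ∈ ({neg ((neg 1 : α) * neg 1), 1, neg 1, neg 1 * neg 1} : Set α)) ∧
    (∀ x ∈ ({neg ((neg 1 : α) * neg 1), 1, neg 1, neg 1 * neg 1} : Set α),
      neg x ∈ ({neg ((neg 1 : α) * neg 1), 1, neg 1, neg 1 * neg 1} : Set α)) := by
  set f : α := neg 1 with hf
  set a : α := neg (f * f) with ha
  -- basic facts
  have hnegf : neg f = 1 := by rw [hf, IRL.neg_neg]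
  have hnega : neg a = f * f := by rw [ha, IRL.neg_neg]
  have hf_le : f ≤ f * f := sq f
  have hff : f < f * f := by
    refine lt_of_le_of_ne hf_le fun h => ?_
    have h2 : f * f ≤ f := le_of_eq h.symm
    have := (res f f f).mp h2
    rw [hnegf, one_mul] at this
    exact absurd (lt_of_lt_of_le hef this) (lt_irrefl _)
  have ha1 : a ≤ 1 := by
    have := irl_neg_anti hf_le
    rwa [hnegf] at this
  have haf : a ≤ f := ha1.trans hef.le
  have haff : a ≤ f * f := haf.trans hf_le
  have h1f : (1:α) ≤ f := hef.le
  have h1ff : (1:α) ≤ f * f := h1f.trans hf_le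
  have halt : a < 1 := by
    refine lt_of_le_of_ne ha1 fun h => ?_
    have : neg a = neg 1 := by rw [h]
    rw [hnega, ← hf] at this
    exact absurd this.symm hff.ne
  -- fusion computations
  have haf1 : a * f ≤ 1 := by
    refine (res a f 1).mpr ?_
    rw [hnega, ← hf]
  have haff1 : a * (f * f) ≤ 1 := by
    calc a * (f * f) ≤ (a * a) * (f * f) := irl_mul_mono (sq a) _
      _ = (a * f) * (a * f) := mul_mul_mul_comm a a f f
      _ ≤ 1 * (a * f) := irl_mul_mono haf1 _
      _ = a * f := one_mul _
      _ ≤ 1 := haf1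
  have hf3 : f * (f * f) ≤ f * f := by
    refine (res f (f * f) (f * f)).mpr ?_
    rw [hnegf, ← ha]
    exact haff1
  have haf_le_a : a * f ≤ a := by
    refine (res a f a).mpr ?_
    rw [hnega, mul_comm (f * f) f]
    exact hf3
  have ha_le_af : a ≤ a * f := by
    calc a ≤ a * a := sq a
      _ ≤ f * a := irl_mul_mono haf a
      _ = a * f := mul_comm f a
  have haf_eq : a * f = a := le_antisymm haf_le_a ha_le_af
  have haff_eq : a * (f * f) = a := by rw [← mul_assoc, haf_eq, haf_eq]
  have haa : a * a = a := le_antisymm (by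
    calc a * a ≤ 1 * a := irl_mul_mono ha1 a
      _ = a := one_mul a) (sq a)
  have hfff : f * (f * f) = f * f := le_antisymm hf3 (by
    calc f * f = 1 * (f * f) := (one_mul _).symm
      _ ≤ f * (f * f) := irl_mul_mono h1f _)
  have hf4 : (f * f) * (f * f) = f * f := by
    refine le_antisymm ?_ (sq (f * f))
    refine (res (f*f) (f*f) (f*f)).mpr ?_
    rw [← ha]
    exact le_of_eq haff_eq
  refine ⟨halt, hef, hff, ?_, ?_⟩
  · intro x hx y hy
    simp only [Set.mem_insert_iff, Set.mem_singleton_iff] at hx hy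
    have memS : ∀ z : α, (z = a ∨ z = 1 ∨ z = f ∨ z = f * f) →
        z ∈ ({a, 1, f, f * f} : Set α) := by
      intro z hz
      simpa [Set.mem_insert_iff] using hz
    rcases hx with rfl | rfl | rfl | rfl <;> rcases hy with rfl | rfl | rfl | rfl <;>
      refine ⟨memS _ ?_, memS _ ?_, memS _ ?_⟩ <;>
      simp [haa, haf_eq, haff_eq, hfff, hf4, mul_comm f a, mul_comm (f*f) a,
        mul_comm (f*f) f, inf_of_le_left, inf_of_le_right, sup_of_le_left, sup_of_le_right,
        ha1, haf, haff, h1f, h1ff, hf_le, le_refl, inf_idem, sup_idem,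
        inf_eq_left.mpr, sup_eq_right.mpr]
  · intro x hx
    simp only [Set.mem_insert_iff, Set.mem_singleton_iff] at hx
    rcases hx with rfl | rfl | rfl | rfl <;>
      simp [hnega, hnegf, Set.mem_insert_iff, ← hf, ← ha]
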